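/- arXiv:2104.14967 — 2 statements merged into one kernel-verified Lean document; each statement's English description precedes it below -/
import Mathlib

section
/- Let G be a finite non-abelian group and suppose u ∈ G \ Z(G) satisfies: for all v ∈ G \ Z(G), either C(u) = C(v) or C(u) ∩ C(v) = Z(G). Then |C(u)| is an eigenvalue of the Laplacian of the commuting graph C_G with multiplicity at least |C(u) \ Z(G)| - 1. -/
/-- The commuting graph of a group: distinct vertices are adjacent iff they commute. -/
def commGraph (G : Type*) [Group G] : SimpleGraph G where
  Adj u v := u ≠ v ∧ u * v = v * u
  symm := ⟨fun _ _ h => ⟨h.1.symm, h.2.symm⟩⟩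
  loopless := ⟨fun _ h => h.1 rfl⟩

instance {G : Type*} [Group G] [DecidableEq G] : DecidableRel (commGraph G).Adj :=
  fun u v => inferInstanceAs (Decidable (u ≠ v ∧ u * v = v * u))

/-- The Laplacian matrix of the commuting graph. -/
noncomputable def commLap (G : Type*) [Group G] [Fintype G] [DecidableEq G] :
    Matrix G G ℝ :=
  SimpleGraph.lapMatrix ℝ (commGraph G)

/-- Multiplicity of `μ` as an eigenvalue of the Laplacian of the commuting graph. -/
noncomputable def lapMult (G : Type*) [Group G] [Fintype G] [DecidableEq G] (μ : ℝ) : ℕ :=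
  Module.finrank ℝ (LinearMap.ker (Matrix.toLin' (commLap G - μ • 1)))

/-- Centralizer of an element, as a set. -/
def centSet {G : Type*} [Group G] (u : G) : Set G := {x | x * u = u * x}

/-- Edge boundary of a set in the commuting graph. -/
def edgeBoundary (G : Type*) [Group G] (S : Set G) : Set (Sym2 G) :=
  {e | e ∈ (commGraph G).edgeSet ∧ ∃ u ∈ S, ∃ v ∈ Sᶜ, e = s(u, v)}

/-- If `u ∉ Z(G)` satisfies: for all `v ∉ Z(G)`, `C(u) = C(v)` or `C(u) ∩ C(v) = Z(G)`,
then `|C(u)|` is an eigenvalue of the Laplacian of the commuting graph with multiplicity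
at least `|C(u) \ Z(G)| - 1`. -/
theorem centralizer_card_eigenvalue (G : Type*) [Group G] [Fintype G] [DecidableEq G]
    (hna : ¬ ∀ a b : G, a * b = b * a) (u : G)
    (hu : u ∉ (Subgroup.center G : Set G))
    (hcond : ∀ v : G, v ∉ (Subgroup.center G : Set G) →
      centSet u = centSet v ∨ centSet u ∩ centSet v = (Subgroup.center G : Set G)) :
    Nat.card (centSet u \ (Subgroup.center G : Set G) : Set G) - 1 ≤
      lapMult G (Nat.card (centSet u)) := by
  classical
  set Z : Set G := (Subgroup.center G : Set G) with hZ
  set S : Set G := centSet u \ Z with hS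
  have huS : u ∈ S := ⟨by simp [centSet], hu⟩
  -- every element of S has the same centralizer as u
  have hcent : ∀ v ∈ S, centSet v = centSet u := by
    intro v hv
    rcases hcond v hv.2 with h | h
    · exact h.symm
    · exfalso
      have : v ∈ centSet u ∩ centSet v := ⟨hv.1, by simp [centSet]⟩
      rw [h] at this
      exact hv.2 this
  set μ : ℝ := (Nat.card (centSet u) : ℝ) with hμ
  -- neighbor finset description
  have hnbhd : ∀ v ∈ S, (commGraph G).neighborFinset v = (centSet u).toFinset.erase v := by
    intro v hv
    ext y
    simp only [SimpleGraph.mem_neighborFinset, Finset.mem_erase, Set.mem_toFinset]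
    constructor
    · rintro ⟨hne, hc⟩
      refine ⟨hne.symm, ?_⟩
      rw [← hcent v hv]
      exact hc.symm
    · rintro ⟨hne, hc⟩
      rw [← hcent v hv] at hc
      exact ⟨hne.symm, hc.symm⟩
  have hcardC : Nat.card (centSet u) = (centSet u).toFinset.card := by
    rw [Nat.card_coe_set_eq, Set.ncard_eq_toFinset_card']
  have hdeg : ∀ v ∈ S, ((commGraph G).degree v : ℕ) + 1 = Nat.card (centSet u) := by
    intro v hv
    rw [SimpleGraph.degree, hnbhd v hv, Finset.card_erase_of_mem (by
      rw [Set.mem_toFinset]; rw [← hcent v hv]; simp [centSet]), hcardC]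
    have hpos : 0 < (centSet u).toFinset.card :=
      Finset.card_pos.2 ⟨u, by rw [Set.mem_toFinset]; simp [centSet]⟩
    omega
  -- eigenvector fact
  have hker : ∀ v ∈ S, v ≠ u →
      (Pi.single v (1:ℝ) - Pi.single u 1) ∈
        LinearMap.ker (Matrix.toLin' (commLap G - μ • 1)) := by
    intro v hv hvu
    rw [LinearMap.mem_ker, Matrix.toLin'_apply]
    funext i
    rw [Matrix.sub_mulVec, Matrix.smul_mulVec, Matrix.one_mulVec]
    simp only [Pi.sub_apply, Pi.smul_apply, Pi.zero_apply, smul_eq_mul]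
    rw [commLap, SimpleGraph.lapMatrix_mulVec_apply]
    have hsum : ∀ s : Finset G, ∑ w ∈ s, ((Pi.single v 1 - Pi.single u 1 : G → ℝ)) w
        = (if v ∈ s then (1:ℝ) else 0) - (if u ∈ s then 1 else 0) := by
      intro s
      simp only [Pi.sub_apply]
      rw [Finset.sum_sub_distrib, Finset.sum_pi_single', Finset.sum_pi_single']
    rw [hsum]
    have hadjvu : (commGraph G).Adj v u := ⟨hvu, hv.1⟩
    have hdegv : ((commGraph G).degree v : ℝ) + 1 = μ := by
      rw [hμ]; exact_mod_cast congrArg Nat.cast (hdeg v hv)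
    have hdegu : ((commGraph G).degree u : ℝ) + 1 = μ := by
      rw [hμ]; exact_mod_cast congrArg Nat.cast (hdeg u huS)
    rcases eq_or_ne i v with h | hiv
    · subst h
      have h1 : ¬ (commGraph G).Adj i i := (commGraph G).loopless.irrefl i
      simp [SimpleGraph.mem_neighborFinset, Pi.single_apply, hvu, Ne.symm hvu, h1, hadjvu]
      linarith
    · rcases eq_or_ne i u with h | hiu
      · subst h
        have h1 : ¬ (commGraph G).Adj i i := (commGraph G).loopless.irrefl i
        simp [SimpleGraph.mem_neighborFinset, Pi.single_apply, hvu, Ne.symm hvu, h1, hadjvu.symm]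
        linarith
      · have hmem : v ∈ (commGraph G).neighborFinset i ↔ u ∈ (commGraph G).neighborFinset i := by
          simp only [SimpleGraph.mem_neighborFinset]
          constructor
          · rintro ⟨_, hc⟩
            refine ⟨hiu, ?_⟩
            have h3 : i ∈ centSet v := hc
            rw [hcent v hv] at h3
            exact h3
          · rintro ⟨_, hc⟩
            refine ⟨hiv, ?_⟩
            have h3 : i ∈ centSet u := hc
            rw [← hcent v hv] at h3
            exact h3
        by_cases h : v ∈ (commGraph G).neighborFinset i
        · have h4 : u ∈ (commGraph G).neighborFinset i := hmem.mp h
          rw [SimpleGraph.mem_neighborFinset] at h h4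
          simp [SimpleGraph.mem_neighborFinset, Pi.single_apply, h, h4, Ne.symm hiv, Ne.symm hiu, hiv, hiu]
        · have h4 : u ∉ (commGraph G).neighborFinset i := fun hc => h (hmem.mpr hc)
          rw [SimpleGraph.mem_neighborFinset] at h h4
          simp [SimpleGraph.mem_neighborFinset, Pi.single_apply, h, h4, Ne.symm hiv, Ne.symm hiu, hiv, hiu]
  -- linear independence
  set T : Set G := S \ {u} with hT
  have hfin : Fintype ↥T := Set.Finite.fintype (Set.toFinite T)
  set f : ↥T → (G → ℝ) := fun v => Pi.single (v : G) 1 - Pi.single u 1 with hf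
  have hli : LinearIndependent ℝ f := by
    rw [Fintype.linearIndependent_iff]
    intro c hc v
    have := congrFun hc (v : G)
    simp only [Finset.sum_apply, Pi.smul_apply, Pi.sub_apply, Pi.zero_apply, hf,
      smul_eq_mul] at this
    rw [Finset.sum_eq_single v] at this
    · have hvu : (v : G) ≠ u := v.2.2
      simpa [Pi.single_apply, hvu] using this
    · intro w _ hwv
      have hwv' : (w : G) ≠ (v : G) := fun h => hwv (Subtype.ext h)
      have hvu : (v : G) ≠ u := v.2.2
      simp [Pi.single_apply, hwv', Ne.symm hvu]
    · simp
  have hspan : Submodule.span ℝ (Set.range f) ≤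
      LinearMap.ker (Matrix.toLin' (commLap G - μ • 1)) := by
    rw [Submodule.span_le]
    rintro _ ⟨v, rfl⟩
    exact hker v v.2.1 v.2.2
  have hrank := Submodule.finrank_mono hspan
  rw [finrank_span_eq_card hli] at hrank
  have hTcard : Fintype.card ↥T = Nat.card (S : Set G) - 1 := by
    rw [← Nat.card_eq_fintype_card, Nat.card_coe_set_eq, Nat.card_coe_set_eq, hT]
    rw [Set.ncard_diff_singleton_of_mem huS]
  rw [hTcard] at hrank
  exact hrank
end

section
/- Let G be a finite non-abelian group such that for all u, v ∈ G \ Z(G), either C(u) = C(v) or C(u) ∩ C(v) = Z(G). Then the algebraic connectivity (second-smallest Laplacian eigenvalue) of the commuting graph C_G equals |Z(G)|. -/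
set_option linter.unusedSectionVars false
set_option linter.unusedTactic false

open Finset Matrix

lemma commGraph_preconnected (G : Type*) [Group G] : (commGraph G).Preconnected := by
  intro u v
  have h1 : ∀ w : G, (commGraph G).Reachable w 1 := by
    intro w
    by_cases hw : w = 1
    · rw [hw]
    · exact SimpleGraph.Adj.reachable ⟨hw, by simp⟩
  exact (h1 u).trans (h1 v).symm

lemma part1 (G : Type*) [Group G] [Fintype G] [DecidableEq G] : lapMult G 0 = 1 := by
  classical
  have h : commLap G - (0:ℝ) • 1 = commLap G := by simp
  rw [lapMult, h, commLap, ← SimpleGraph.card_connectedComponent_eq_finrank_ker_toLin'_lapMatrix]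
  have : Subsingleton (commGraph G).ConnectedComponent := by
    constructor
    intro c d
    refine SimpleGraph.ConnectedComponent.ind₂ (fun u v => ?_) c d
    exact SimpleGraph.ConnectedComponent.sound (commGraph_preconnected G u v)
  have : Nonempty (commGraph G).ConnectedComponent := ⟨SimpleGraph.connectedComponentMk _ 1⟩
  exact Fintype.card_eq_one_iff.mpr ⟨Classical.arbitrary _, fun y => Subsingleton.elim y _⟩

section
variable {G : Type*} [Group G] [Fintype G] [DecidableEq G]

instance (u : G) : DecidablePred (· ∈ centSet u) :=
  fun x => decidable_of_iff (x * u = u * x) Iff.rfl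

lemma self_mem_centSet (u : G) : u ∈ centSet u := rfl

lemma center_subset_centSet (u : G) : (Subgroup.center G : Set G) ⊆ centSet u := by
  intro x hx
  exact (Subgroup.mem_center_iff.mp hx u).symm

lemma sum_piecewise (A B : Set G) [DecidablePred (· ∈ A)] [DecidablePred (· ∈ B)]
    (hd : ∀ x, x ∈ A → x ∉ B) (c d : ℝ) (s : Finset G) :
    ∑ y ∈ s, (if y ∈ A then c else if y ∈ B then d else 0)
      = (s.filter (· ∈ A)).card * c + (s.filter (· ∈ B)).card * d := by
  have : ∀ y, (if y ∈ A then c else if y ∈ B then d else 0)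
      = (if y ∈ A then c else 0) + (if y ∈ B then d else 0) := by
    intro y
    by_cases hA : y ∈ A
    · simp [hA, hd y hA]
    · simp [hA]
  simp_rw [this, Finset.sum_add_distrib, ← Finset.sum_filter, Finset.sum_const,
    nsmul_eq_mul]

lemma neighborFinset_commGraph (x : G) :
    (commGraph G).neighborFinset x = (univ.filter (· ∈ centSet x)).erase x := by
  ext y
  simp only [SimpleGraph.mem_neighborFinset, Finset.mem_erase, Finset.mem_filter,
    Finset.mem_univ, true_and]
  constructor
  · rintro ⟨h1, h2⟩; exact ⟨Ne.symm h1, h2.symm⟩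
  · rintro ⟨h1, h2⟩; exact ⟨Ne.symm h1, h2.symm⟩

lemma part2 (hna : ¬ ∀ a b : G, a * b = b * a)
    (hcond : ∀ u v : G, u ∉ (Subgroup.center G : Set G) →
      v ∉ (Subgroup.center G : Set G) →
      centSet u = centSet v ∨ centSet u ∩ centSet v = (Subgroup.center G : Set G)) :
    0 < lapMult G (Nat.card (Subgroup.center G)) := by
  classical
  push_neg at hna
  obtain ⟨a, b, hab⟩ := hna
  set Z : Set G := (Subgroup.center G : Set G) with hZ
  have ha : a ∉ Z := fun h => hab ((Subgroup.mem_center_iff.mp h b).symm)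
  have hb : b ∉ Z := fun h => hab (Subgroup.mem_center_iff.mp h a)
  have hba : b ∉ centSet a := fun h => hab h.symm
  have hne : centSet a ≠ centSet b := fun h => hba (h ▸ self_mem_centSet b)
  have hint : centSet a ∩ centSet b = Z := (hcond a b ha hb).resolve_left hne
  set A : Set G := centSet a \ Z with hA
  set B : Set G := centSet b \ Z with hB
  have hdAB : ∀ x, x ∈ A → x ∉ B := by
    intro x hxA hxB
    exact hxA.2 (hint ▸ ⟨hxA.1, hxB.1⟩)
  set n1 : ℕ := (univ.filter (· ∈ A)).card with hn1
  set n2 : ℕ := (univ.filter (· ∈ B)).card with hn2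
  set zc : ℕ := (univ.filter (· ∈ Z)).card with hzc
  have hzcard : Nat.card (Subgroup.center G) = zc := by
    rw [Nat.card_eq_fintype_card, hzc]
    convert Fintype.card_subtype (p := (· ∈ Z)) using 2
    rfl
  set f : G → ℝ := fun x => if x ∈ A then (n2 : ℝ) else if x ∈ B then -(n1 : ℝ) else 0
    with hf
  -- basic facts
  have haA : a ∈ A := ⟨self_mem_centSet a, ha⟩
  have hbB : b ∈ B := ⟨self_mem_centSet b, hb⟩
  have hn2pos : 0 < n2 := Finset.card_pos.mpr ⟨b, by simp [hbB]⟩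
  -- key pointwise computation
  have key : ∀ x : G, ((univ.filter (· ∈ centSet x)).card : ℝ) * f x
      - ∑ y ∈ univ.filter (· ∈ centSet x), f y = zc * f x := by
    intro x
    have hsum := sum_piecewise A B hdAB ((n2 : ℝ)) (-(n1 : ℝ))
    by_cases hxZ : x ∈ Z
    · -- central vertex
      have hcx : univ.filter (· ∈ centSet x) = univ := by
        apply Finset.filter_true_of_mem
        intro y _
        exact (Subgroup.mem_center_iff.mp hxZ y)
      have hfx : f x = 0 := by
        have : x ∉ A := fun h => h.2 hxZ
        have h2 : x ∉ B := fun h => h.2 hxZ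
        simp [hf, this, h2]
      rw [hcx, hfx, hsum univ, ← hn1, ← hn2]
      push_cast
      ring
    · by_cases hxA : x ∈ A
      · have hcx : centSet x = centSet a := by
          rcases hcond x a hxZ ha with h | h
          · exact h
          · exfalso
            have : a ∈ centSet x ∩ centSet a := ⟨hxA.1.symm, self_mem_centSet a⟩
            exact ha (h ▸ this)
        have hfilt : univ.filter (· ∈ centSet x) = univ.filter (· ∈ centSet a) := by
          simp_rw [hcx]
        have hfA : (univ.filter (· ∈ centSet a)).filter (· ∈ A) = univ.filter (· ∈ A) := by
          rw [Finset.filter_filter]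
          apply Finset.filter_congr
          intro y _
          exact ⟨fun h => h.2, fun h => ⟨h.1, h⟩⟩
        have hfB : (univ.filter (· ∈ centSet a)).filter (· ∈ B) = ∅ := by
          rw [Finset.filter_filter, Finset.filter_eq_empty_iff]
          intro y _
          rintro ⟨hy1, hy2⟩
          exact hy2.2 (hint ▸ ⟨hy1, hy2.1⟩)
        have hcard : (univ.filter (· ∈ centSet a)).card = zc + n1 := by
          have e1 : (univ.filter (· ∈ centSet a)).filter (· ∈ Z) = univ.filter (· ∈ Z) := by
            rw [Finset.filter_filter]
            ext y
            simp only [Finset.mem_filter, Finset.mem_univ, true_and]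
            exact ⟨fun h => h.2, fun h => ⟨center_subset_centSet a h, h⟩⟩
          have e2 : (univ.filter (· ∈ centSet a)).filter (fun y => ¬ y ∈ Z)
              = univ.filter (· ∈ centSet a \ Z) := by
            rw [Finset.filter_filter]
            ext y
            simp only [Finset.mem_filter, Finset.mem_univ, true_and, Set.mem_diff]
            --
          rw [← Finset.card_filter_add_card_filter_not
            (s := univ.filter (· ∈ centSet a)) (p := (· ∈ Z)), e1, e2]
        have hfx : f x = n2 := by simp [hf, hxA]
        rw [hfilt, hsum, hfA, hfB, hcard, hfx, ← hn1]
        simp only [Finset.card_empty]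
        push_cast
        ring
      · by_cases hxB : x ∈ B
        · have hcx : centSet x = centSet b := by
            rcases hcond x b hxZ hb with h | h
            · exact h
            · exfalso
              have : b ∈ centSet x ∩ centSet b := ⟨hxB.1.symm, self_mem_centSet b⟩
              exact hb (h ▸ this)
          have hfilt : univ.filter (· ∈ centSet x) = univ.filter (· ∈ centSet b) := by
            simp_rw [hcx]
          have hfB' : (univ.filter (· ∈ centSet b)).filter (· ∈ B) = univ.filter (· ∈ B) := by
            rw [Finset.filter_filter]
            apply Finset.filter_congr
            intro y _
            exact ⟨fun h => h.2, fun h => ⟨h.1, h⟩⟩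
          have hfA' : (univ.filter (· ∈ centSet b)).filter (· ∈ A) = ∅ := by
            rw [Finset.filter_filter, Finset.filter_eq_empty_iff]
            intro y _
            rintro ⟨hy1, hy2⟩
            exact hy2.2 (hint ▸ ⟨hy2.1, hy1⟩)
          have hcard : (univ.filter (· ∈ centSet b)).card = zc + n2 := by
            have e1 : (univ.filter (· ∈ centSet b)).filter (· ∈ Z) = univ.filter (· ∈ Z) := by
              rw [Finset.filter_filter]
              ext y
              simp only [Finset.mem_filter, Finset.mem_univ, true_and]
              exact ⟨fun h => h.2, fun h => ⟨center_subset_centSet b h, h⟩⟩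
            have e2 : (univ.filter (· ∈ centSet b)).filter (fun y => ¬ y ∈ Z)
                = univ.filter (· ∈ centSet b \ Z) := by
              rw [Finset.filter_filter]
              ext y
              simp only [Finset.mem_filter, Finset.mem_univ, true_and, Set.mem_diff]
              --
            rw [← Finset.card_filter_add_card_filter_not
              (s := univ.filter (· ∈ centSet b)) (p := (· ∈ Z)), e1, e2]
          have hfx : f x = -(n1 : ℝ) := by simp [hf, hxA, hxB]
          rw [hfilt, hsum, hfB', hfA', hcard, hfx, ← hn2]
          simp only [Finset.card_empty]
          push_cast
          ring
        · -- x not related to a or b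
          have hxa : centSet x ∩ centSet a = Z := by
            rcases hcond x a hxZ ha with h | h
            · exfalso; exact hxA ⟨h ▸ self_mem_centSet x, hxZ⟩
            · exact h
          have hxb : centSet x ∩ centSet b = Z := by
            rcases hcond x b hxZ hb with h | h
            · exfalso; exact hxB ⟨h ▸ self_mem_centSet x, hxZ⟩
            · exact h
          have hfA' : (univ.filter (· ∈ centSet x)).filter (· ∈ A) = ∅ := by
            rw [Finset.filter_filter, Finset.filter_eq_empty_iff]
            intro y _
            rintro ⟨hy1, hy2⟩
            exact hy2.2 (hxa ▸ ⟨hy1, hy2.1⟩)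
          have hfB' : (univ.filter (· ∈ centSet x)).filter (· ∈ B) = ∅ := by
            rw [Finset.filter_filter, Finset.filter_eq_empty_iff]
            intro y _
            rintro ⟨hy1, hy2⟩
            exact hy2.2 (hxb ▸ ⟨hy1, hy2.1⟩)
          have hfx : f x = 0 := by simp [hf, hxA, hxB]
          rw [hsum, hfA', hfB', hfx]
          simp
  -- f is in the kernel
  have hker : Matrix.toLin' (commLap G - ((Nat.card (Subgroup.center G) : ℝ)) • 1) f = 0 := by
    rw [Matrix.toLin'_apply]
    funext x
    simp only [Matrix.sub_mulVec, Matrix.smul_mulVec, Matrix.one_mulVec, Pi.sub_apply,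
      Pi.smul_apply, Pi.zero_apply, smul_eq_mul]
    have happ := SimpleGraph.lapMatrix_mulVec_apply (commGraph G) x f
    have hx1 : x ∈ univ.filter (· ∈ centSet x) := by simp [self_mem_centSet x]
    have hcardpos : 1 ≤ (univ.filter (· ∈ centSet x)).card := Finset.card_pos.mpr ⟨x, hx1⟩
    have hdeg : ((commGraph G).degree x : ℝ) = ((univ.filter (· ∈ centSet x)).card : ℝ) - 1 := by
      rw [← SimpleGraph.card_neighborFinset_eq_degree, neighborFinset_commGraph,
        Finset.card_erase_of_mem hx1, Nat.cast_sub hcardpos, Nat.cast_one]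
    unfold commLap
    rw [happ, hdeg, neighborFinset_commGraph, Finset.sum_erase_eq_sub hx1, hzcard]
    have hk := key x
    linarith [hk]
  -- conclude positivity
  have hfa : f a = (n2 : ℝ) := by simp [hf, haA]
  have hfne : f ≠ 0 := by
    intro h
    rw [h] at hfa
    simp only [Pi.zero_apply] at hfa
    exact absurd hfa.symm (by positivity)
  rw [lapMult]
  rw [Module.finrank_pos_iff_exists_ne_zero]
  exact ⟨⟨f, LinearMap.mem_ker.mpr hker⟩, fun h => hfne (congrArg Subtype.val h)⟩

lemma part3 (μ : ℝ) (hm : 0 < lapMult G μ) (hμ : μ ≠ 0) :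
    (Nat.card (Subgroup.center G) : ℝ) ≤ μ := by
  classical
  rw [lapMult] at hm
  obtain ⟨⟨g, hgker⟩, hgne⟩ := Module.finrank_pos_iff_exists_ne_zero.mp hm
  have hg : g ≠ 0 := fun h => hgne (Subtype.ext h)
  rw [LinearMap.mem_ker, Matrix.toLin'_apply] at hgker
  have heig : commLap G *ᵥ g = μ • g := by
    rw [Matrix.sub_mulVec, Matrix.smul_mulVec, Matrix.one_mulVec, sub_eq_zero] at hgker
    exact hgker
  -- the sum of g is zero
  have hsymm : (commLap G)ᵀ = commLap G := SimpleGraph.isSymm_lapMatrix ℝ (commGraph G)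
  have hone : (fun _ => (1:ℝ)) ᵥ* commLap G = 0 := by
    have h2 : (fun _ => (1:ℝ)) ᵥ* (commLap G)ᵀᵀ = (commLap G)ᵀ *ᵥ (fun _ => 1) :=
      Matrix.vecMul_transpose _ _
    rw [Matrix.transpose_transpose, hsymm] at h2
    rw [h2]
    exact SimpleGraph.lapMatrix_mulVec_const_eq_zero (commGraph G)
  have hsum0 : ∑ x, g x = 0 := by
    have h1 : (fun _ => (1:ℝ)) ⬝ᵥ (commLap G *ᵥ g) = μ * ∑ x, g x := by
      rw [heig]
      simp [dotProduct, Finset.mul_sum]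
    rw [Matrix.dotProduct_mulVec, hone, zero_dotProduct] at h1
    exact (mul_eq_zero.mp h1.symm).resolve_left hμ
  -- notation for the relevant sums
  set h : G → ℝ := fun i => if i ∈ (Subgroup.center G : Set G) then 1 else 0 with hh
  set Q : ℝ := ∑ x, g x ^ 2 with hQ
  set A : ℝ := ∑ x, h x with hA
  set B : ℝ := ∑ x, h x * g x with hB
  set C : ℝ := ∑ x, h x * g x ^ 2 with hC
  set nr : ℝ := ∑ _x : G, (1:ℝ) with hnr
  -- quadratic form value
  have hQform : g ⬝ᵥ (commLap G *ᵥ g)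
      = (∑ i, ∑ j, if (commGraph G).Adj i j then (g i - g j)^2 else 0) / 2 := by
    rw [← Matrix.toLinearMap₂'_apply']
    exact SimpleGraph.lapMatrix_toLinearMap₂' ℝ (commGraph G) g
  have hQval : g ⬝ᵥ (commLap G *ᵥ g) = μ * Q := by
    rw [heig, hQ]
    simp [dotProduct, Finset.mul_sum]
    ring_nf
    apply Finset.sum_congr rfl
    intro x _
    ring
  -- pointwise bound
  have hpt : ∀ i j : G, (h i + h j - h i * h j) * (g i - g j)^2
      ≤ (if (commGraph G).Adj i j then (g i - g j)^2 else 0) := by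
    intro i j
    by_cases hij : i = j
    · subst hij
      simp
    · by_cases hi : i ∈ (Subgroup.center G : Set G)
      · have hadj : (commGraph G).Adj i j := ⟨hij, (Subgroup.mem_center_iff.mp hi j).symm⟩
        rw [if_pos hadj, hh]
        simp only [if_pos hi]
        by_cases hj : j ∈ (Subgroup.center G : Set G) <;> simp [hj]
      · by_cases hj : j ∈ (Subgroup.center G : Set G)
        · have hadj : (commGraph G).Adj i j := ⟨hij, Subgroup.mem_center_iff.mp hj i⟩
          rw [if_pos hadj, hh]
          simp only [if_pos hj, if_neg hi]
          nlinarith [sq_nonneg (g i - g j)]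
        · rw [hh]
          simp only [if_neg hi, if_neg hj]
          have : ((0:ℝ) + 0 - 0 * 0) * (g i - g j)^2 = 0 := by ring
          rw [this]
          split
          · positivity
          · exact le_rfl
  -- expansion of the split-graph quadratic form
  have inner : ∀ i : G, (∑ j, (h i + h j - h i * h j) * (g i - g j)^2)
      = (h i * g i^2) * nr + (-(2 * (h i * g i))) * (∑ j, g j) + (h i) * Q
        + ((1 - h i) * g i^2) * A + (-(2 * ((1 - h i) * g i))) * B + (1 - h i) * C := by
    intro i
    have e : ∀ j : G, (h i + h j - h i * h j) * (g i - g j)^2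
        = (h i * g i^2) * 1 + (-(2 * (h i * g i))) * g j + (h i) * (g j ^ 2)
          + ((1 - h i) * g i^2) * h j + (-(2 * ((1 - h i) * g i))) * (h j * g j)
          + (1 - h i) * (h j * g j ^ 2) := by
      intro j; ring
    rw [Finset.sum_congr rfl (fun j _ => e j)]
    simp only [Finset.sum_add_distrib, ← Finset.mul_sum]
    rw [hnr, hQ, hA, hB, hC]
  have hS2 : (∑ i, ∑ j, (h i + h j - h i * h j) * (g i - g j)^2)
      = 2*nr*C + 2*A*Q - 2*A*C + 2*B^2 := by
    have step1 : (∑ i, ∑ j, (h i + h j - h i * h j) * (g i - g j)^2)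
        = ∑ i : G, ((h i * g i^2) * nr + (-(2 * (h i * g i))) * (0:ℝ) + (h i) * Q
          + ((1 - h i) * g i^2) * A + (-(2 * ((1 - h i) * g i))) * B + (1 - h i) * C) := by
      refine Finset.sum_congr rfl (fun i _ => ?_)
      rw [inner i, hsum0]
    have step2 : (∑ i : G, ((h i * g i^2) * nr + (-(2 * (h i * g i))) * (0:ℝ) + (h i) * Q
          + ((1 - h i) * g i^2) * A + (-(2 * ((1 - h i) * g i))) * B + (1 - h i) * C))
        = ∑ i : G, ((nr - A) * (h i * g i ^ 2) + (Q - C) * h i + (2*B) * (h i * g i)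
          + A * (g i ^ 2) + (-(2*B)) * g i + C * 1) :=
      Finset.sum_congr rfl (fun i _ => by ring)
    rw [step1, step2]
    simp only [Finset.sum_add_distrib, ← Finset.mul_sum]
    have e1 : ∑ i : G, h i * g i ^2 = C := hC.symm
    have e2 : ∑ i : G, h i * g i = B := hB.symm
    have e3 : ∑ i : G, h i = A := hA.symm
    have e4 : ∑ i : G, g i ^ 2 = Q := hQ.symm
    have e6 : ∑ _i : G, (1:ℝ) = nr := hnr.symm
    rw [e1, e2, e3, e4, hsum0, e6]
    ring
  -- auxiliary positivity facts
  have hbound : (∑ i, ∑ j, (h i + h j - h i * h j) * (g i - g j)^2)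
      ≤ ∑ i, ∑ j, if (commGraph G).Adj i j then (g i - g j)^2 else 0 :=
    Finset.sum_le_sum fun i _ => Finset.sum_le_sum fun j _ => hpt i j
  have hAcard : A = (Nat.card (Subgroup.center G) : ℝ) := by
    rw [hA, hh]
    rw [Finset.sum_boole]
    congr 1
    rw [Nat.card_eq_fintype_card]
    convert (Fintype.card_subtype (p := (· ∈ (Subgroup.center G : Set G)))).symm using 2
    rfl
  have hAn : A ≤ nr := by
    rw [hA, hnr]
    refine Finset.sum_le_sum fun i _ => ?_
    simp only [hh]
    split <;> norm_num
  have hC0 : 0 ≤ C := by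
    rw [hC]
    refine Finset.sum_nonneg fun i _ => mul_nonneg ?_ (sq_nonneg _)
    simp only [hh]
    split <;> norm_num
  have hQpos : 0 < Q := by
    obtain ⟨i, hi⟩ := Function.ne_iff.mp hg
    rw [hQ]
    refine Finset.sum_pos' (fun x _ => sq_nonneg _) ⟨i, Finset.mem_univ i, ?_⟩
    exact lt_of_le_of_ne (sq_nonneg _) (Ne.symm (pow_ne_zero 2 hi))
  have hfinal : (Nat.card (Subgroup.center G) : ℝ) * Q ≤ μ * Q := by
    have h1 : μ * Q = (∑ i, ∑ j, if (commGraph G).Adj i j then (g i - g j)^2 else 0) / 2 := by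
      rw [← hQval, hQform]
    nlinarith [hbound, hS2, hC0, hAn, sq_nonneg B, hAcard,
      mul_nonneg (sub_nonneg.mpr hAn) hC0]
  exact le_of_mul_le_mul_right hfinal hQpos

end

/-- If for all `u, v ∉ Z(G)`, `C(u) = C(v)` or `C(u) ∩ C(v) = Z(G)`, the algebraic
connectivity of the commuting graph (the second-smallest Laplacian eigenvalue) is `|Z(G)|`:
`0` is an eigenvalue of multiplicity one, `|Z(G)|` is an eigenvalue, and every nonzero
eigenvalue is at least `|Z(G)|`. -/
theorem algebraic_connectivity_eq_card_center (G : Type*) [Group G] [Fintype G]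
    [DecidableEq G]
    (hna : ¬ ∀ a b : G, a * b = b * a)
    (hcond : ∀ u v : G, u ∉ (Subgroup.center G : Set G) →
      v ∉ (Subgroup.center G : Set G) →
      centSet u = centSet v ∨ centSet u ∩ centSet v = (Subgroup.center G : Set G)) :
    lapMult G 0 = 1 ∧ 0 < lapMult G (Nat.card (Subgroup.center G)) ∧
      ∀ μ : ℝ, 0 < lapMult G μ → μ ≠ 0 → (Nat.card (Subgroup.center G) : ℝ) ≤ μ := by
  exact ⟨part1 G, part2 hna hcond, fun μ hm hμ => part3 μ hm hμ⟩
end
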